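/- The moments of Lucas polynomials are central binomial coefficients: if Λ_L is the linear functional determined by Λ_L(L*_n(x,-1)) = [n=0] (with L*_0 = 1), then Λ_L(x^{2n}) = C(2n,n) and Λ_L(x^{2n+1}) = 0. -/

import Mathlib

open Finset Polynomial

noncomputable def lucasPoly : ℕ → Polynomial ℝ
  | 0 => 2
  | 1 => Polynomial.X
  | (n + 2) => Polynomial.X * lucasPoly (n + 1) - lucasPoly n

noncomputable def lucasStarPoly (n : ℕ) : Polynomial ℝ :=
  if n = 0 then 1 else lucasPoly n

lemma eval_lucas (t : ℝ) (ht : t ≠ 0) : ∀ n : ℕ,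
    (lucasPoly n).eval (t + t⁻¹) = t ^ n + (t⁻¹) ^ n
  | 0 => by norm_num [lucasPoly]
  | 1 => by simp [lucasPoly]
  | (n + 2) => by
    have h1 := eval_lucas t ht (n + 1)
    have h0 := eval_lucas t ht n
    simp only [lucasPoly, eval_sub, eval_mul, eval_X, h1, h0]
    field_simp
    linear_combination (t * t⁻¹ ^ n - t⁻¹ * t⁻¹ ^ n) * mul_inv_cancel₀ ht

lemma sum_id (t u : ℝ) (h : t * u = 1) (m : ℕ) :
    ∑ k ∈ range (m + 1), (m.choose k : ℝ) * t ^ (m - k) * u ^ k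
      = ∑ k ∈ range (m / 2 + 1),
          (m.choose k : ℝ) * (if m - 2 * k = 0 then 1 else t ^ (m - 2 * k) + u ^ (m - 2 * k)) := by
  have key : ∀ k, k ≤ m / 2 → t ^ (m - k) * u ^ k = t ^ (m - 2 * k) := by
    intro k hk
    have : m - k = (m - 2 * k) + k := by omega
    rw [this, pow_add, mul_assoc, ← mul_pow, h, one_pow, mul_one]
  have key' : ∀ k, k ≤ m / 2 → t ^ k * u ^ (m - k) = u ^ (m - 2 * k) := by
    intro k hk
    have : m - k = (m - 2 * k) + k := by omega
    rw [this, pow_add, ← mul_assoc, mul_comm (t ^ k), mul_assoc, ← mul_pow, h, one_pow, mul_one]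
  have hsplit : ∑ k ∈ range (m + 1), (m.choose k : ℝ) * t ^ (m - k) * u ^ k
      = (∑ k ∈ range (m / 2 + 1), (m.choose k : ℝ) * t ^ (m - k) * u ^ k)
        + ∑ k ∈ Ico (m / 2 + 1) (m + 1), (m.choose k : ℝ) * t ^ (m - k) * u ^ k := by
    rw [range_eq_Ico, ← Finset.sum_Ico_consecutive _ (by omega : 0 ≤ m / 2 + 1) (by omega : m / 2 + 1 ≤ m + 1), range_eq_Ico]
  have hrefl : ∑ k ∈ Ico (m / 2 + 1) (m + 1), (m.choose k : ℝ) * t ^ (m - k) * u ^ k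
      = ∑ k ∈ range (m - m / 2), (m.choose k : ℝ) * t ^ k * u ^ (m - k) := by
    apply Finset.sum_nbij' (fun i => m - i) (fun j => m - j)
    · intro a ha; simp only [mem_Ico] at ha; simp only [mem_range]; omega
    · intro a ha; simp only [mem_range] at ha; simp only [mem_Ico]; omega
    · intro a ha; simp only [mem_Ico] at ha; omega
    · intro a ha; simp only [mem_range] at ha; omega
    · intro a ha
      simp only [mem_Ico] at ha
      have h1 : m - (m - a) = a := by omega
      have h2 : (m.choose (m - a)) = m.choose a := Nat.choose_symm (by omega)
      rw [h1, h2]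
  rw [hsplit, hrefl]
  rcases Nat.even_or_odd m with ⟨s, hs⟩ | ⟨s, hs⟩
  · -- m = 2s (even)
    have hm2 : m / 2 = s := by omega
    rw [hm2]
    have hmm : m - s = s := by omega
    rw [hmm]
    rw [Finset.sum_range_succ, Finset.sum_range_succ (fun k => (m.choose k : ℝ) * _)]
    have hms : m - 2 * s = 0 := by omega
    have hif : (if m - 2 * s = 0 then (1:ℝ) else t ^ (m - 2 * s) + u ^ (m - 2 * s)) = 1 :=
      if_pos hms
    rw [hif, mul_one]
    have hlast : (m.choose s : ℝ) * t ^ (m - s) * u ^ s = (m.choose s : ℝ) := by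
      rw [mul_assoc, key s (by omega), hms, pow_zero, mul_one]
    rw [hlast, add_right_comm, ← Finset.sum_add_distrib]
    congr 1
    apply Finset.sum_congr rfl
    intro k hk
    simp only [mem_range] at hk
    have hne : m - 2 * k ≠ 0 := by omega
    rw [if_neg hne, mul_assoc, mul_assoc, key k (by omega), key' k (by omega)]
    ring
  · -- m = 2s+1 (odd)
    have hm2 : m / 2 = s := by omega
    rw [hm2]
    have hmm : m - s = s + 1 := by omega
    rw [hmm, ← Finset.sum_add_distrib]
    apply Finset.sum_congr rfl
    intro k hk
    simp only [mem_range] at hk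
    have hne : m - 2 * k ≠ 0 := by omega
    rw [if_neg hne, mul_assoc, mul_assoc, key k (by omega), key' k (by omega)]
    ring

lemma key_identity (m : ℕ) : (Polynomial.X : Polynomial ℝ) ^ m
    = ∑ k ∈ range (m / 2 + 1), ((m.choose k : ℝ)) • lucasStarPoly (m - 2 * k) := by
  apply eq_of_infinite_eval_eq
  apply @Set.Infinite.mono _ ((fun t : ℝ => t + t⁻¹) '' Set.Ioi 1)
  · rintro _ ⟨t, ht, rfl⟩
    have ht1 : (1:ℝ) < t := ht
    have ht0 : t ≠ 0 := by linarith
    have htu : t * t⁻¹ = 1 := mul_inv_cancel₀ ht0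
    simp only [Set.mem_setOf_eq, eval_pow, eval_X, eval_finset_sum, eval_smul, smul_eq_mul]
    rw [add_pow]
    have heval : ∀ k ∈ range (m / 2 + 1),
        (m.choose k : ℝ) * (lucasStarPoly (m - 2 * k)).eval (t + t⁻¹)
        = (m.choose k : ℝ) * (if m - 2 * k = 0 then 1 else t ^ (m - 2 * k) + (t⁻¹) ^ (m - 2 * k)) := by
      intro k hk
      unfold lucasStarPoly
      split_ifs with h0
      · simp
      · rw [eval_lucas t ht0]
    rw [Finset.sum_congr rfl heval]
    have e1 : ∑ k ∈ range (m + 1), t ^ k * t⁻¹ ^ (m - k) * (m.choose k : ℝ)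
        = ∑ k ∈ range (m + 1), (m.choose k : ℝ) * t⁻¹ ^ (m - k) * t ^ k :=
      Finset.sum_congr rfl (fun k _ => by ring)
    rw [e1, sum_id t⁻¹ t (inv_mul_cancel₀ ht0) m]
    apply Finset.sum_congr rfl
    intro k hk
    split_ifs <;> ring
  · apply Set.Infinite.image
    · intro a ha b hb hab
      simp only [Set.mem_Ioi] at ha hb
      have ha0 : a ≠ 0 := by linarith
      have hb0 : b ≠ 0 := by linarith
      field_simp at hab
      have h2 : (a - b) * (a * b - 1) = 0 := by linear_combination hab
      have h3 : a * b - 1 ≠ 0 := by nlinarith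
      have := mul_eq_zero.mp h2
      rcases this with h4 | h4
      · linarith [sub_eq_zero.mp h4]
      · exact absurd h4 h3
    · exact Set.Ioi_infinite 1

/-- The moments of the Lucas polynomials are the central binomial coefficients:
if `Λ(L*_n(x,-1)) = [n=0]` then `Λ(x^{2n}) = C(2n,n)` and `Λ(x^{2n+1}) = 0`. -/
theorem lucas_moments (Λ : Polynomial ℝ →ₗ[ℝ] ℝ)
    (h : ∀ n : ℕ, Λ (lucasStarPoly n) = if n = 0 then 1 else 0) (n : ℕ) :
    Λ (Polynomial.X ^ (2 * n)) = ((2 * n).choose n : ℝ) ∧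
    Λ (Polynomial.X ^ (2 * n + 1)) = 0 := by
  constructor
  · rw [key_identity (2 * n), map_sum]
    have hd : (2 * n) / 2 = n := by omega
    rw [hd]
    have : ∀ k ∈ range (n + 1), Λ (((2 * n).choose k : ℝ) • lucasStarPoly (2 * n - 2 * k))
        = if k = n then ((2 * n).choose n : ℝ) else 0 := by
      intro k hk
      simp only [mem_range] at hk
      rw [map_smul, h, smul_eq_mul]
      by_cases hkn : k = n
      · subst hkn; simp
      · have hne : 2 * n - 2 * k ≠ 0 := by omega
        rw [if_neg hne, mul_zero, if_neg hkn]
    rw [Finset.sum_congr rfl this, Finset.sum_ite_eq' (range (n + 1)) n]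
    simp
  · rw [key_identity (2 * n + 1), map_sum]
    apply Finset.sum_eq_zero
    intro k hk
    simp only [mem_range] at hk
    rw [map_smul, h, smul_eq_mul]
    have : 2 * n + 1 - 2 * k ≠ 0 := by omega
    rw [if_neg this, mul_zero]
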